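/- Let w be a word over an alphabet Σ in which every letter occurs at most once (|w|_a ≤ 1 for all a ∈ Σ). Then the singleton language {w} is 2-piecewise testable; equivalently, every word u with u ∼_2 w satisfies u = w. -/

import Mathlib

/-- `subk k w` is the set of scattered subwords of `w` of length at most `k`. -/
def subk {α : Type*} (k : ℕ) (w : List α) : Set (List α) :=
  {u | u.length ≤ k ∧ u.Sublist w}

/-- Two words are `k`-equivalent if they have the same subwords of length at most `k`. -/
def kEquiv {α : Type*} (k : ℕ) (u v : List α) : Prop :=
  subk k u = subk k v

/-- A language is `k`-piecewise testable (Simon's characterization):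
`k`-equivalent words are equi-members. -/
def IsPT {α : Type*} (k : ℕ) (L : Language α) : Prop :=
  ∀ u v : List α, kEquiv k u v → (u ∈ L ↔ v ∈ L)

/-- A DFA is minimal if all states are reachable and pairwise distinguishable. -/
def IsMinimalDFA {α σ : Type*} (A : DFA α σ) : Prop :=
  (∀ q : σ, ∃ w : List α, A.eval w = q) ∧
  ∀ p q : σ,
    (∀ w : List α, (A.evalFrom p w ∈ A.accept ↔ A.evalFrom q w ∈ A.accept)) → p = q

/-- There is a simple path (pairwise distinct states) with `m` transitions in the DFA `A`. -/
def DFAHasSimplePath {α σ : Type*} (A : DFA α σ) (m : ℕ) : Prop :=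
  ∃ (qs : Fin (m + 1) → σ) (as : Fin m → α),
    Function.Injective qs ∧ ∀ i : Fin m, A.step (qs i.castSucc) (as i) = qs i.succ

/-- The depth of a DFA: the number of transitions on a longest simple path. -/
noncomputable def dfaDepth {α σ : Type*} (A : DFA α σ) : ℕ :=
  sSup {m | DFAHasSimplePath A m}

/-- There is a simple path (pairwise distinct states) with `m` transitions in the NFA `A`. -/
def NFAHasSimplePath {α σ : Type*} (A : NFA α σ) (m : ℕ) : Prop :=
  ∃ (qs : Fin (m + 1) → σ) (as : Fin m → α),
    Function.Injective qs ∧ ∀ i : Fin m, qs i.succ ∈ A.step (qs i.castSucc) (as i)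

/-- The depth of an NFA: the number of transitions on a longest simple path. -/
noncomputable def nfaDepth {α σ : Type*} (A : NFA α σ) : ℕ :=
  sSup {m | NFAHasSimplePath A m}

/-- If every letter occurs at most once in `w`, then `{w}` is 2-piecewise testable;
equivalently, every word 2-equivalent to `w` equals `w`. -/

lemma keylem {α : Type*} : ∀ (w u : List α), w.Nodup → u.Nodup →
    (∀ a, a ∈ u ↔ a ∈ w) → (∀ a b, List.Sublist [a, b] u ↔ List.Sublist [a, b] w) → u = w := by
  intro w
  induction w with
  | nil =>
    intro u _ _ hmem _
    exact List.eq_nil_iff_forall_not_mem.mpr fun a ha => by simpa using (hmem a).mp ha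
  | cons a w' ih =>
    intro u hw hu hmem hpair
    have hanw' : a ∉ w' := (List.nodup_cons.mp hw).1
    have ha : a ∈ u := (hmem a).mpr List.mem_cons_self
    match u, hu with
    | b :: u', hu =>
      have hbnu' : b ∉ u' := (List.nodup_cons.mp hu).1
      have hb : b = a := by
        by_contra hba
        have hbw' : b ∈ w' := by
          have := (hmem b).mp List.mem_cons_self
          rcases List.mem_cons.mp this with h | h
          · exact absurd h hba
          · exact h
        have hau' : a ∈ u' := by
          rcases List.mem_cons.mp ha with h | h
          · exact absurd h.symm hba
          · exact h
        have hs : List.Sublist [b, a] (a :: w') :=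
          (hpair b a).mp ((List.singleton_sublist.mpr hau').cons₂ b)
        cases hs with
        | cons _ h => exact hanw' (by simpa using h.subset (by simp))
        | cons_cons _ h => exact hba rfl
      subst hb
      have : u' = w' := by
        refine ih u' (List.nodup_cons.mp hw).2 (List.nodup_cons.mp hu).2 ?_ ?_
        · intro c
          constructor
          · intro hc
            have := (hmem c).mp (List.mem_cons_of_mem _ hc)
            rcases List.mem_cons.mp this with h | h
            · exact absurd (h ▸ hc) hbnu'
            · exact h
          · intro hc
            have := (hmem c).mpr (List.mem_cons_of_mem _ hc)
            rcases List.mem_cons.mp this with h | h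
            · exact absurd (h ▸ hc) hanw'
            · exact h
        · intro x y
          constructor
          · intro hs
            have hs2 : List.Sublist [x, y] (b :: w') := (hpair x y).mp (hs.cons b)
            cases hs2 with
            | cons _ h => exact h
            | cons_cons _ h =>
              exact absurd (hs.subset (by simp)) hbnu'
          · intro hs
            have hs2 : List.Sublist [x, y] (b :: u') := (hpair x y).mpr (hs.cons b)
            cases hs2 with
            | cons _ h => exact h
            | cons_cons _ h =>
              exact absurd (hs.subset (by simp)) hanw'
      rw [this]

lemma sub_of_kEquiv {α : Type*} {u w : List α} (h : kEquiv 2 u w) :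
    ∀ s : List α, s.length ≤ 2 → (List.Sublist s u ↔ List.Sublist s w) := by
  intro s hs
  have := Set.ext_iff.mp h s
  simpa [subk, hs] using this

lemma eq_of_kEquiv {α : Type*} [DecidableEq α] {u w : List α}
    (h : ∀ a : α, w.count a ≤ 1) (hk : kEquiv 2 u w) : u = w := by
  have hw : w.Nodup := List.nodup_iff_count_le_one.mpr h
  have hsub := sub_of_kEquiv hk
  have hu : u.Nodup := by
    rw [List.nodup_iff_sublist]
    intro a ha
    exact (List.nodup_iff_sublist.mp hw) a ((hsub [a, a] (by simp)).mp ha)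
  refine keylem w u hw hu ?_ ?_
  · intro a
    rw [← List.singleton_sublist, ← List.singleton_sublist]
    exact hsub [a] (by simp)
  · intro a b
    exact hsub [a, b] (by simp)

theorem stmt7 {α : Type*} [DecidableEq α] (w : List α)
    (h : ∀ a : α, w.count a ≤ 1) :
    IsPT 2 ({w} : Language α) ∧ ∀ u : List α, kEquiv 2 u w → u = w := by
  constructor
  · intro u v huv
    show u ∈ ({w} : Set (List α)) ↔ v ∈ ({w} : Set (List α))
    simp only [Set.mem_singleton_iff]
    constructor
    · rintro rfl
      exact (eq_of_kEquiv h (huv.symm : kEquiv 2 v u)).symm ▸ rfl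
    · rintro rfl
      exact eq_of_kEquiv h huv
  · intro u hu
    exact eq_of_kEquiv h hu
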